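/- Let τ := Δ + q_δ, where q_δ is the absolute value of the δ-quantile of Lap(Δ/ε), and let M denote the PositiveLaplaceMechanism with parameters ε, τ and sensitivity Δ. Then for every v ∈ ℝ and every measurable set S ⊂ ℝ, P(M(v) ∈ S ∩ [v, v + Δ]) ≤ δ. -/

import Mathlib

open MeasureTheory Real

/-- The Laplace distribution on ℝ with location 0 and scale `b`. -/
noncomputable def laplace (b : ℝ) : Measure ℝ :=
  volume.withDensity fun x => ENNReal.ofReal ((2 * b)⁻¹ * Real.exp (-|x| / b))

/-- On input `v`, the PositiveLaplaceMechanism samples `η ~ Lap(Δ/ε)` and outputs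
`max v (v + τ + η)`; so `P(M(v) ∈ S)` is the Laplace measure of the preimage. -/
noncomputable def posLapProb (ε τ Δ : ℝ) (v : ℝ) (S : Set ℝ) : ENNReal :=
  laplace (Δ / ε) {η : ℝ | max v (v + τ + η) ∈ S}

lemma exp_div_integrableOn_Iic (b c : ℝ) (hb : 0 < b) :
    IntegrableOn (fun x => Real.exp (x / b)) (Set.Iic c) := by
  have h : (Set.Iic c).indicator (fun x => Real.exp (x / b))
      = fun x => (Set.Iic (c / b)).indicator Real.exp (b⁻¹ * x) := by
    funext x
    simp only [Set.indicator_apply, Set.mem_Iic]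
    rw [mul_comm, ← div_eq_mul_inv]
    have hiff : x / b ≤ c / b ↔ x ≤ c := div_le_div_iff_of_pos_right hb
    by_cases hx : x ≤ c
    · rw [if_pos hx, if_pos (hiff.mpr hx)]
    · rw [if_neg hx, if_neg (fun h => hx (hiff.mp h))]
  apply (integrable_indicator_iff measurableSet_Iic).mp
  rw [h]
  exact ((integrable_indicator_iff measurableSet_Iic).mpr
    (integrableOn_exp_Iic (c / b))).comp_mul_left' (inv_ne_zero hb.ne')

lemma integral_exp_div_Iic (b c : ℝ) (hb : 0 < b) :
    ∫ x in Set.Iic c, Real.exp (x / b) = b * Real.exp (c / b) := by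
  have h1 := integral_comp_neg_Iic c (fun y => Real.exp (-y / b))
  simp only [neg_neg] at h1
  rw [h1]
  have h2 : ∀ x : ℝ, Real.exp (-x / b) = (fun y => Real.exp (-y)) (x * b⁻¹) := by
    intro x; simp [neg_div, div_eq_mul_inv]
  simp_rw [h2]
  rw [integral_comp_mul_right_Ioi (fun y => Real.exp (-y)) (-c) (inv_pos.mpr hb)]
  rw [integral_exp_neg_Ioi]
  simp [neg_div, div_eq_mul_inv, smul_eq_mul]

lemma laplace_Iic (b c : ℝ) (hb : 0 < b) (hc : c ≤ 0) :
    laplace b (Set.Iic c) = ENNReal.ofReal (2⁻¹ * Real.exp (c / b)) := by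
  rw [laplace, withDensity_apply _ measurableSet_Iic]
  have hcong : ∫⁻ x in Set.Iic c, ENNReal.ofReal ((2 * b)⁻¹ * Real.exp (-|x| / b))
      = ∫⁻ x in Set.Iic c, ENNReal.ofReal ((2 * b)⁻¹ * Real.exp (x / b)) := by
    apply setLIntegral_congr_fun measurableSet_Iic
    intro x (hx : x ≤ c)
    beta_reduce
    rw [abs_of_nonpos (hx.trans hc), neg_neg]
  rw [hcong]
  have hint : IntegrableOn (fun x => (2 * b)⁻¹ * Real.exp (x / b)) (Set.Iic c) :=
    (exp_div_integrableOn_Iic b c hb).const_mul _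
  rw [← ofReal_integral_eq_lintegral_ofReal hint
    (Filter.Eventually.of_forall fun x => by positivity)]
  rw [integral_const_mul, integral_exp_div_Iic b c hb]
  congr 1
  field_simp

/-- With `τ := Δ + q_δ` where `q_δ = (Δ/ε)·ln(1/(2δ))` is the absolute value of the
`δ`-quantile of `Lap(Δ/ε)`, for every `v` and every measurable `S`,
`P(M(v) ∈ S ∩ [v, v + Δ]) ≤ δ`. -/
theorem stmt_5 (ε δ Δ : ℝ) (hε : 0 < ε) (hδ : δ ∈ Set.Ioo (0 : ℝ) (1 / 2)) (hΔ : 0 < Δ)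
    (τ : ℝ) (hτ : τ = Δ + (Δ / ε) * Real.log (1 / (2 * δ))) :
    ∀ v : ℝ, ∀ S : Set ℝ, MeasurableSet S →
      posLapProb ε τ Δ v (S ∩ Set.Icc v (v + Δ)) ≤ ENNReal.ofReal δ := by
  intro v S hS
  obtain ⟨hδ0, hδhalf⟩ := hδ
  set b : ℝ := Δ / ε with hbdef
  have hb : 0 < b := div_pos hΔ hε
  set q : ℝ := b * Real.log (1 / (2 * δ)) with hqdef
  have h2δ : (0 : ℝ) < 2 * δ := by linarith
  have hlog : 0 ≤ Real.log (1 / (2 * δ)) := by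
    apply Real.log_nonneg
    rw [le_div_iff₀ h2δ]
    linarith
  have hq : 0 ≤ q := mul_nonneg hb.le hlog
  have hsub : {η : ℝ | max v (v + τ + η) ∈ S ∩ Set.Icc v (v + Δ)} ⊆ Set.Iic (-q) := by
    intro η hη
    obtain ⟨-, -, hle⟩ := hη
    have : v + τ + η ≤ v + Δ := le_trans (le_max_right _ _) hle
    have : η ≤ Δ - τ := by linarith
    rw [Set.mem_Iic]; linarith
  calc posLapProb ε τ Δ v (S ∩ Set.Icc v (v + Δ))
      ≤ laplace b (Set.Iic (-q)) := measure_mono hsub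
    _ = ENNReal.ofReal (2⁻¹ * Real.exp (-q / b)) :=
        laplace_Iic b (-q) hb (by linarith)
    _ = ENNReal.ofReal δ := by
        congr 1
        have h1 : -q / b = -Real.log (1 / (2 * δ)) := by
          rw [hqdef]; field_simp
        rw [h1, Real.exp_neg, Real.exp_log (by positivity), one_div, inv_inv]
        ring
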